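/- Let r(n) denote the parity of the number of runs of 1's in the binary representation of n. Then there is no n with r(n) = r(n+1) = r(n+2) = r(n+3) = r(n+4), i.e., the sequence R contains no five consecutive equal terms. -/

import Mathlib

/-- Digits of the negabinary (base -2) representation, least significant first. -/
def negaDigits (n : ℤ) : List ℕ :=
  if n = 0 then [] else (n % 2).toNat :: negaDigits ((n % 2 - n) / 2)
termination_by 2 * n.natAbs + (if n < 0 then 1 else 0)
decreasing_by split_ifs <;> omega

/-- Parity of the number of 1's in the negabinary representation of n. -/
def g (n : ℕ) : ℕ := (negaDigits n).sum % 2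

/-- The digit at position i in the negabinary representation. -/
def negaDigit (n : ℤ) (i : ℕ) : ℕ := (negaDigits n).getD i 0

/-- Number of runs (maximal blocks) of 1's in the binary representation of n. -/
def runsOfOnes (n : ℕ) : ℕ :=
  ((Finset.range (n + 1)).filter (fun i => n.testBit i ∧ ¬ n.testBit (i + 1))).card

/-- Parity of the number of runs of 1's in the binary representation of n. -/
def r (n : ℕ) : ℕ := runsOfOnes n % 2

/-- The finset of right endpoints of runs of ones. -/
def runSet (n : ℕ) : Finset ℕ :=
  (Finset.range (n + 1)).filter (fun i => n.testBit i ∧ ¬ n.testBit (i + 1))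

lemma runsOfOnes_eq (n : ℕ) : runsOfOnes n = (runSet n).card := rfl

lemma two_pow_le_of_testBit {n i : ℕ} (h : n.testBit i = true) : 2 ^ i ≤ n := by
  by_contra hc
  rw [Nat.testBit_eq_false_of_lt (by omega)] at h
  exact absurd h (by simp)

lemma mem_runSet {n i : ℕ} : i ∈ runSet n ↔ n.testBit i ∧ ¬ n.testBit (i + 1) := by
  unfold runSet
  simp only [Finset.mem_filter, Finset.mem_range]
  constructor
  · rintro ⟨_, h⟩; exact h
  · rintro ⟨h1, h2⟩
    refine ⟨?_, h1, h2⟩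
    have := two_pow_le_of_testBit h1
    have := Nat.lt_two_pow_self (n := i)
    omega

lemma testBit_two_mul_succ (m i : ℕ) : (2 * m).testBit (i + 1) = m.testBit i := by
  rw [Nat.testBit_succ]; congr 1; omega

lemma testBit_two_mul_add_one_succ (m i : ℕ) : (2 * m + 1).testBit (i + 1) = m.testBit i := by
  rw [Nat.testBit_succ]; congr 1; omega

lemma testBit_two_mul_zero (m : ℕ) : (2 * m).testBit 0 = false := by
  rw [Nat.testBit_zero]; simp [Nat.mul_mod_right]

lemma testBit_two_mul_add_one_zero (m : ℕ) : (2 * m + 1).testBit 0 = true := by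
  rw [Nat.testBit_zero]; simp [Nat.mul_add_mod]

lemma runSet_two_mul (m : ℕ) : runSet (2 * m) = (runSet m).image (· + 1) := by
  ext j
  rw [mem_runSet, Finset.mem_image]
  cases j with
  | zero =>
    simp [testBit_two_mul_zero]
  | succ i =>
    rw [testBit_two_mul_succ, testBit_two_mul_succ]
    constructor
    · rintro ⟨h1, h2⟩; exact ⟨i, mem_runSet.2 ⟨h1, h2⟩, rfl⟩
    · rintro ⟨k, hk, hk2⟩
      have : k = i := by omega
      subst this
      exact mem_runSet.1 hk

lemma runSet_two_mul_add_one_even (m : ℕ) (hm : m % 2 = 0) :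
    runSet (2 * m + 1) = insert 0 ((runSet m).image (· + 1)) := by
  ext j
  rw [mem_runSet, Finset.mem_insert, Finset.mem_image]
  cases j with
  | zero =>
    simp only [testBit_two_mul_add_one_zero, testBit_two_mul_add_one_succ]
    have : m.testBit 0 = false := by rw [Nat.testBit_zero]; simp; omega
    simp [this]
  | succ i =>
    rw [testBit_two_mul_add_one_succ, testBit_two_mul_add_one_succ]
    constructor
    · rintro ⟨h1, h2⟩; exact Or.inr ⟨i, mem_runSet.2 ⟨h1, h2⟩, rfl⟩
    · rintro (h | ⟨k, hk, hk2⟩)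
      · omega
      · have : k = i := by omega
        subst this
        exact mem_runSet.1 hk

lemma runSet_two_mul_add_one_odd (m : ℕ) (hm : m % 2 = 1) :
    runSet (2 * m + 1) = (runSet m).image (· + 1) := by
  ext j
  rw [mem_runSet, Finset.mem_image]
  cases j with
  | zero =>
    simp only [testBit_two_mul_add_one_zero, testBit_two_mul_add_one_succ]
    have : m.testBit 0 = true := by rw [Nat.testBit_zero]; simp; omega
    simp [this]
  | succ i =>
    rw [testBit_two_mul_add_one_succ, testBit_two_mul_add_one_succ]
    constructor
    · rintro ⟨h1, h2⟩; exact ⟨i, mem_runSet.2 ⟨h1, h2⟩, rfl⟩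
    · rintro ⟨k, hk, hk2⟩
      have : k = i := by omega
      subst this
      exact mem_runSet.1 hk

lemma card_image_succ (s : Finset ℕ) : (s.image (· + 1)).card = s.card :=
  Finset.card_image_of_injective s (fun a b h => by omega)

lemma runsOfOnes_two_mul (m : ℕ) : runsOfOnes (2 * m) = runsOfOnes m := by
  rw [runsOfOnes_eq, runsOfOnes_eq, runSet_two_mul, card_image_succ]

lemma runsOfOnes_two_mul_add_one_even (m : ℕ) (hm : m % 2 = 0) :
    runsOfOnes (2 * m + 1) = runsOfOnes m + 1 := by
  rw [runsOfOnes_eq, runsOfOnes_eq, runSet_two_mul_add_one_even m hm,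
    Finset.card_insert_of_notMem (by simp), card_image_succ]

lemma runsOfOnes_two_mul_add_one_odd (m : ℕ) (hm : m % 2 = 1) :
    runsOfOnes (2 * m + 1) = runsOfOnes m := by
  rw [runsOfOnes_eq, runsOfOnes_eq, runSet_two_mul_add_one_odd m hm, card_image_succ]

lemma r_two_mul (m : ℕ) : r (2 * m) = r m := by
  unfold r; rw [runsOfOnes_two_mul]

lemma r_odd_even (m : ℕ) (hm : m % 2 = 0) : r (2 * m + 1) = (r m + 1) % 2 := by
  unfold r; rw [runsOfOnes_two_mul_add_one_even m hm]; omega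

lemma r_odd_odd (m : ℕ) (hm : m % 2 = 1) : r (2 * m + 1) = r m := by
  unfold r; rw [runsOfOnes_two_mul_add_one_odd m hm]

lemma r_lt_two (n : ℕ) : r n < 2 := by unfold r; omega

theorem stmt13 :
    ¬ ∃ n : ℕ, r n = r (n + 1) ∧ r (n + 1) = r (n + 2) ∧
      r (n + 2) = r (n + 3) ∧ r (n + 3) = r (n + 4) := by
  rintro ⟨n, h0, h1, h2, h3⟩
  rcases Nat.even_or_odd n with ⟨m, hn⟩ | ⟨m, hn⟩
  · -- n = 2m
    subst hn
    have e0 : r (m + m) = r m := by rw [show m + m = 2 * m by ring, r_two_mul]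
    have e2 : r (m + m + 2) = r (m + 1) := by
      rw [show m + m + 2 = 2 * (m + 1) by ring, r_two_mul]
    rcases Nat.even_or_odd m with hm | hm
    · have hme : m % 2 = 0 := Nat.even_iff.1 hm
      have e1 : r (m + m + 1) = (r m + 1) % 2 := by
        rw [show m + m + 1 = 2 * m + 1 by ring, r_odd_even m hme]
      have := r_lt_two m
      omega
    · have hmo : m % 2 = 1 := Nat.odd_iff.1 hm
      have e1 : r (m + m + 1) = r m := by
        rw [show m + m + 1 = 2 * m + 1 by ring, r_odd_odd m hmo]
      have e3 : r (m + m + 3) = (r (m + 1) + 1) % 2 := by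
        rw [show m + m + 3 = 2 * (m + 1) + 1 by ring, r_odd_even (m + 1) (by omega)]
      have := r_lt_two m
      have := r_lt_two (m + 1)
      omega
  · -- n = 2m + 1
    subst hn
    have e1 : r (2 * m + 1 + 1) = r (m + 1) := by
      rw [show 2 * m + 1 + 1 = 2 * (m + 1) by ring, r_two_mul]
    have e3 : r (2 * m + 1 + 3) = r (m + 2) := by
      rw [show 2 * m + 1 + 3 = 2 * (m + 2) by ring, r_two_mul]
    rcases Nat.even_or_odd m with hm | hm
    · have hme : m % 2 = 0 := Nat.even_iff.1 hm
      have e4 : r (2 * m + 1 + 4) = (r (m + 2) + 1) % 2 := by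
        rw [show 2 * m + 1 + 4 = 2 * (m + 2) + 1 by ring, r_odd_even (m + 2) (by omega)]
      have := r_lt_two (m + 2)
      omega
    · have hmo : m % 2 = 1 := Nat.odd_iff.1 hm
      have e2 : r (2 * m + 1 + 2) = (r (m + 1) + 1) % 2 := by
        rw [show 2 * m + 1 + 2 = 2 * (m + 1) + 1 by ring, r_odd_even (m + 1) (by omega)]
      have := r_lt_two (m + 1)
      omega
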